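/- For every path connected subset A of the Manhattan plane ℝ₁², the double hatching L(A) is L-invariant, i.e. L(L(A)) = L(A). -/

import Mathlib

open Set

/-- The taxicab (ℓ¹) distance on the plane, making `ℝ × ℝ` the Manhattan plane ℝ₁². -/
def taxiDist (p q : ℝ × ℝ) : ℝ := |p.1 - q.1| + |p.2 - q.2|

/-- Horizontal hatching `L_x(A)`. -/
def hatchX (A : Set (ℝ × ℝ)) : Set (ℝ × ℝ) :=
  {p | ∃ a ∈ A, ∃ b ∈ A, a.2 = p.2 ∧ b.2 = p.2 ∧ a.1 ≤ p.1 ∧ p.1 ≤ b.1}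

/-- Vertical hatching `L_y(A)`. -/
def hatchY (A : Set (ℝ × ℝ)) : Set (ℝ × ℝ) :=
  {p | ∃ a ∈ A, ∃ b ∈ A, a.1 = p.1 ∧ b.1 = p.1 ∧ a.2 ≤ p.2 ∧ p.2 ≤ b.2}

/-- Double hatching `L(A) = L_x(L_y(A))`. -/
def doubleHatch (A : Set (ℝ × ℝ)) : Set (ℝ × ℝ) := hatchX (hatchY A)

lemma subset_hatchX (B : Set (ℝ × ℝ)) : B ⊆ hatchX B :=
  fun p hp => ⟨p, hp, p, hp, rfl, rfl, le_refl _, le_refl _⟩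

lemma subset_hatchY (B : Set (ℝ × ℝ)) : B ⊆ hatchY B :=
  fun p hp => ⟨p, hp, p, hp, rfl, rfl, le_refl _, le_refl _⟩

lemma hatchX_mono {B C : Set (ℝ × ℝ)} (h : B ⊆ C) : hatchX B ⊆ hatchX C := by
  rintro p ⟨a, ha, b, hb, h1, h2, h3, h4⟩
  exact ⟨a, h ha, b, h hb, h1, h2, h3, h4⟩

lemma hatchX_idem (B : Set (ℝ × ℝ)) : hatchX (hatchX B) = hatchX B := by
  apply subset_antisymm
  · rintro p ⟨a, ⟨a1, ha1, a2, ha2, e1, e2, l1, l2⟩, b, ⟨b1, hb1, b2, hb2, f1, f2, m1, m2⟩,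
      g1, g2, g3, g4⟩
    exact ⟨a1, ha1, b2, hb2, e1.trans g1, f2.trans g2, l1.trans g3, g4.trans m2⟩
  · exact subset_hatchX _

/-- Left witness: if `A` is path connected and contains a point weakly left of `x`
and weakly below `y`, and a point weakly left of `x` and weakly above `y`, then
`hatchY A` contains a point on the row `y` weakly left of `x`. -/
lemma exists_left_witness {A : Set (ℝ × ℝ)} (hA : IsPathConnected A)
    {x y : ℝ} {b c : ℝ × ℝ} (hb : b ∈ A) (hc : c ∈ A)
    (hbx : b.1 ≤ x) (hcx : c.1 ≤ x) (hby : b.2 ≤ y) (hcy : y ≤ c.2) :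
    ∃ q ∈ hatchY A, q.2 = y ∧ q.1 ≤ x := by
  obtain ⟨γ, hγ⟩ := hA.joinedIn b hb c hc
  set g : ℝ → ℝ × ℝ := ⇑γ.extend with hgdef
  have hg : Continuous g := γ.continuous_extend
  have hmem : ∀ t ∈ Icc (0:ℝ) 1, g t ∈ A := by
    intro t ht
    rw [hgdef, γ.extend_apply ht]
    exact hγ _
  have hg0 : g 0 = b := γ.extend_zero
  have hg1 : g 1 = c := γ.extend_one
  by_cases hcr : ∃ t ∈ Icc (0:ℝ) 1, (g t).2 = y ∧ (g t).1 ≤ x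
  · obtain ⟨t, ht, h1, h2⟩ := hcr
    exact ⟨g t, subset_hatchY A (hmem t ht), h1, h2⟩
  push_neg at hcr
  -- first time the path reaches the closed upper half plane
  set S := {t : ℝ | t ∈ Icc (0:ℝ) 1 ∧ y ≤ (g t).2} with hSdef
  have hScl : IsClosed S :=
    isClosed_Icc.inter (isClosed_le continuous_const (continuous_snd.comp hg))
  have h1S : (1:ℝ) ∈ S := ⟨⟨zero_le_one, le_refl 1⟩, by rw [hg1]; exact hcy⟩
  have hbddS : BddBelow S := ⟨0, fun t ht => ht.1.1⟩
  set t₀ := sInf S with ht₀def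
  have ht₀S : t₀ ∈ S := hScl.csInf_mem ⟨1, h1S⟩ hbddS
  have hlt : ∀ t, 0 ≤ t → t < t₀ → (g t).2 < y := by
    intro t h0 h1
    by_contra h
    push_neg at h
    have : t ∈ S := ⟨⟨h0, h1.le.trans ht₀S.1.2⟩, h⟩
    exact absurd (csInf_le hbddS this) (not_le.2 h1)
  have hy0 : (g t₀).2 = y := by
    rcases eq_or_lt_of_le ht₀S.1.1 with h | h
    · refine le_antisymm ?_ ht₀S.2
      rw [← h, hg0]
      exact hby
    · refine le_antisymm ?_ ht₀S.2
      have htd : Filter.Tendsto (fun t => (g t).2) (nhdsWithin t₀ (Iio t₀)) (nhds (g t₀).2) :=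
        ((continuous_snd.comp hg).tendsto t₀).mono_left nhdsWithin_le_nhds
      refine le_of_tendsto htd ?_
      filter_upwards [Ioo_mem_nhdsLT_of_mem (⟨h, le_refl _⟩ : t₀ ∈ Ioc 0 t₀)] with t ht
      exact (hlt t ht.1.le ht.2).le
  have hx0 : x < (g t₀).1 := hcr t₀ ht₀S.1 hy0
  obtain ⟨s, hs, hgs⟩ :=
    intermediate_value_Icc ht₀S.1.1 ((continuous_fst.comp hg).continuousOn)
      (⟨by rw [hg0]; exact hbx, hx0.le⟩ : x ∈ Icc ((g 0).1) ((g t₀).1))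
  have hsy : (g s).2 ≤ y := by
    rcases lt_or_eq_of_le hs.2 with h | h
    · exact (hlt s hs.1 h).le
    · rw [h, hy0]
  -- last time the path is in the closed lower half plane
  set T := {t : ℝ | t ∈ Icc (0:ℝ) 1 ∧ (g t).2 ≤ y} with hTdef
  have hTcl : IsClosed T :=
    isClosed_Icc.inter (isClosed_le (continuous_snd.comp hg) continuous_const)
  have h0T : (0:ℝ) ∈ T := ⟨⟨le_refl 0, zero_le_one⟩, by rw [hg0]; exact hby⟩
  have hbddT : BddAbove T := ⟨1, fun t ht => ht.1.2⟩
  set t₁ := sSup T with ht₁def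
  have ht₁T : t₁ ∈ T := hTcl.csSup_mem ⟨0, h0T⟩ hbddT
  have hgt : ∀ t, t₁ < t → t ≤ 1 → y < (g t).2 := by
    intro t h1 h2
    by_contra h
    push_neg at h
    have : t ∈ T := ⟨⟨ht₁T.1.1.trans h1.le, h2⟩, h⟩
    exact absurd (le_csSup hbddT this) (not_le.2 h1)
  have hy1 : (g t₁).2 = y := by
    rcases eq_or_lt_of_le ht₁T.1.2 with h | h
    · refine le_antisymm ht₁T.2 ?_
      rw [h, hg1]
      exact hcy
    · refine le_antisymm ht₁T.2 ?_
      have htd : Filter.Tendsto (fun t => (g t).2) (nhdsWithin t₁ (Ioi t₁)) (nhds (g t₁).2) :=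
        ((continuous_snd.comp hg).tendsto t₁).mono_left nhdsWithin_le_nhds
      refine ge_of_tendsto htd ?_
      filter_upwards [Ioo_mem_nhdsGT_of_mem (⟨le_refl _, h⟩ : t₁ ∈ Ico t₁ 1)] with t ht
      exact (hgt t ht.1 ht.2.le).le
  have hx1 : x < (g t₁).1 := hcr t₁ ht₁T.1 hy1
  obtain ⟨s', hs', hgs'⟩ :=
    intermediate_value_Icc' ht₁T.1.2 ((continuous_fst.comp hg).continuousOn)
      (⟨by rw [hg1]; exact hcx, hx1.le⟩ : x ∈ Icc ((g 1).1) ((g t₁).1))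
  have hs'y : y ≤ (g s').2 := by
    rcases lt_or_eq_of_le hs'.1 with h | h
    · exact (hgt s' h hs'.2).le
    · rw [← h, hy1]
  have hsI : s ∈ Icc (0:ℝ) 1 := ⟨hs.1, hs.2.trans ht₀S.1.2⟩
  have hs'I : s' ∈ Icc (0:ℝ) 1 := ⟨ht₁T.1.1.trans hs'.1, hs'.2⟩
  refine ⟨(x, y), ⟨g s, hmem s hsI, g s', hmem s' hs'I, hgs, hgs', hsy, hs'y⟩, rfl, le_refl x⟩

/-- Right witness: mirror image of `exists_left_witness`. -/
lemma exists_right_witness {A : Set (ℝ × ℝ)} (hA : IsPathConnected A)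
    {x y : ℝ} {b c : ℝ × ℝ} (hb : b ∈ A) (hc : c ∈ A)
    (hbx : x ≤ b.1) (hcx : x ≤ c.1) (hby : b.2 ≤ y) (hcy : y ≤ c.2) :
    ∃ q ∈ hatchY A, q.2 = y ∧ x ≤ q.1 := by
  obtain ⟨γ, hγ⟩ := hA.joinedIn b hb c hc
  set g : ℝ → ℝ × ℝ := ⇑γ.extend with hgdef
  have hg : Continuous g := γ.continuous_extend
  have hmem : ∀ t ∈ Icc (0:ℝ) 1, g t ∈ A := by
    intro t ht
    rw [hgdef, γ.extend_apply ht]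
    exact hγ _
  have hg0 : g 0 = b := γ.extend_zero
  have hg1 : g 1 = c := γ.extend_one
  by_cases hcr : ∃ t ∈ Icc (0:ℝ) 1, (g t).2 = y ∧ x ≤ (g t).1
  · obtain ⟨t, ht, h1, h2⟩ := hcr
    exact ⟨g t, subset_hatchY A (hmem t ht), h1, h2⟩
  push_neg at hcr
  set S := {t : ℝ | t ∈ Icc (0:ℝ) 1 ∧ y ≤ (g t).2} with hSdef
  have hScl : IsClosed S :=
    isClosed_Icc.inter (isClosed_le continuous_const (continuous_snd.comp hg))
  have h1S : (1:ℝ) ∈ S := ⟨⟨zero_le_one, le_refl 1⟩, by rw [hg1]; exact hcy⟩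
  have hbddS : BddBelow S := ⟨0, fun t ht => ht.1.1⟩
  set t₀ := sInf S with ht₀def
  have ht₀S : t₀ ∈ S := hScl.csInf_mem ⟨1, h1S⟩ hbddS
  have hlt : ∀ t, 0 ≤ t → t < t₀ → (g t).2 < y := by
    intro t h0 h1
    by_contra h
    push_neg at h
    have : t ∈ S := ⟨⟨h0, h1.le.trans ht₀S.1.2⟩, h⟩
    exact absurd (csInf_le hbddS this) (not_le.2 h1)
  have hy0 : (g t₀).2 = y := by
    rcases eq_or_lt_of_le ht₀S.1.1 with h | h
    · refine le_antisymm ?_ ht₀S.2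
      rw [← h, hg0]
      exact hby
    · refine le_antisymm ?_ ht₀S.2
      have htd : Filter.Tendsto (fun t => (g t).2) (nhdsWithin t₀ (Iio t₀)) (nhds (g t₀).2) :=
        ((continuous_snd.comp hg).tendsto t₀).mono_left nhdsWithin_le_nhds
      refine le_of_tendsto htd ?_
      filter_upwards [Ioo_mem_nhdsLT_of_mem (⟨h, le_refl _⟩ : t₀ ∈ Ioc 0 t₀)] with t ht
      exact (hlt t ht.1.le ht.2).le
  have hx0 : (g t₀).1 < x := hcr t₀ ht₀S.1 hy0
  obtain ⟨s, hs, hgs⟩ :=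
    intermediate_value_Icc' ht₀S.1.1 ((continuous_fst.comp hg).continuousOn)
      (⟨hx0.le, by rw [hg0]; exact hbx⟩ : x ∈ Icc ((g t₀).1) ((g 0).1))
  have hsy : (g s).2 ≤ y := by
    rcases lt_or_eq_of_le hs.2 with h | h
    · exact (hlt s hs.1 h).le
    · rw [h, hy0]
  set T := {t : ℝ | t ∈ Icc (0:ℝ) 1 ∧ (g t).2 ≤ y} with hTdef
  have hTcl : IsClosed T :=
    isClosed_Icc.inter (isClosed_le (continuous_snd.comp hg) continuous_const)
  have h0T : (0:ℝ) ∈ T := ⟨⟨le_refl 0, zero_le_one⟩, by rw [hg0]; exact hby⟩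
  have hbddT : BddAbove T := ⟨1, fun t ht => ht.1.2⟩
  set t₁ := sSup T with ht₁def
  have ht₁T : t₁ ∈ T := hTcl.csSup_mem ⟨0, h0T⟩ hbddT
  have hgt : ∀ t, t₁ < t → t ≤ 1 → y < (g t).2 := by
    intro t h1 h2
    by_contra h
    push_neg at h
    have : t ∈ T := ⟨⟨ht₁T.1.1.trans h1.le, h2⟩, h⟩
    exact absurd (le_csSup hbddT this) (not_le.2 h1)
  have hy1 : (g t₁).2 = y := by
    rcases eq_or_lt_of_le ht₁T.1.2 with h | h
    · refine le_antisymm ht₁T.2 ?_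
      rw [h, hg1]
      exact hcy
    · refine le_antisymm ht₁T.2 ?_
      have htd : Filter.Tendsto (fun t => (g t).2) (nhdsWithin t₁ (Ioi t₁)) (nhds (g t₁).2) :=
        ((continuous_snd.comp hg).tendsto t₁).mono_left nhdsWithin_le_nhds
      refine ge_of_tendsto htd ?_
      filter_upwards [Ioo_mem_nhdsGT_of_mem (⟨le_refl _, h⟩ : t₁ ∈ Ico t₁ 1)] with t ht
      exact (hgt t ht.1 ht.2.le).le
  have hx1 : (g t₁).1 < x := hcr t₁ ht₁T.1 hy1
  obtain ⟨s', hs', hgs'⟩ :=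
    intermediate_value_Icc ht₁T.1.2 ((continuous_fst.comp hg).continuousOn)
      (⟨hx1.le, by rw [hg1]; exact hcx⟩ : x ∈ Icc ((g t₁).1) ((g 1).1))
  have hs'y : y ≤ (g s').2 := by
    rcases lt_or_eq_of_le hs'.1 with h | h
    · exact (hgt s' h hs'.2).le
    · rw [← h, hy1]
  have hsI : s ∈ Icc (0:ℝ) 1 := ⟨hs.1, hs.2.trans ht₀S.1.2⟩
  have hs'I : s' ∈ Icc (0:ℝ) 1 := ⟨ht₁T.1.1.trans hs'.1, hs'.2⟩
  refine ⟨(x, y), ⟨g s, hmem s hsI, g s', hmem s' hs'I, hgs, hgs', hsy, hs'y⟩, rfl, le_refl x⟩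

/-- The key lemma: for path connected `A`,
`L_y(L_x(L_y(A))) ⊆ L_x(L_y(A))`. -/
lemma hatchY_doubleHatch_subset {A : Set (ℝ × ℝ)} (hA : IsPathConnected A) :
    hatchY (hatchX (hatchY A)) ⊆ hatchX (hatchY A) := by
  rintro p ⟨u, hu, v, hv, hu1, hv1, hu2, hv2⟩
  obtain ⟨qa, hqa, qb, hqb, hqa2, hqb2, hqa1, hqb1⟩ := hu
  obtain ⟨ca, hca, cb, hcb, hca2, hcb2, hca1, hcb1⟩ := hv
  obtain ⟨e, he, f, hf, he1, hf1, he2, hf2⟩ := hqa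
  obtain ⟨e', he', f', hf', he'1, hf'1, he'2, hf'2⟩ := hqb
  obtain ⟨e'', he'', f'', hf'', he''1, hf''1, he''2, hf''2⟩ := hca
  obtain ⟨e''', he''', f''', hf''', he'''1, hf'''1, he'''2, hf'''2⟩ := hcb
  -- e : below-left point, f'' : above-left point
  have hbx : e.1 ≤ p.1 := by rw [he1]; exact hqa1.trans (le_of_eq hu1)
  have hby : e.2 ≤ p.2 := he2.trans (hqa2.symm ▸ hu2)
  have hcx : f''.1 ≤ p.1 := by rw [hf''1]; exact hca1.trans (le_of_eq hv1)
  have hcy : p.2 ≤ f''.2 := (hv2.trans (hca2 ▸ le_refl v.2)).trans hf''2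
  obtain ⟨q, hq, hq2, hq1⟩ := exists_left_witness hA he hf'' hbx hcx hby hcy
  -- e' : below-right point, f''' : above-right point
  have hbx' : p.1 ≤ e'.1 := by rw [he'1]; exact (le_of_eq hu1.symm).trans hqb1
  have hby' : e'.2 ≤ p.2 := he'2.trans (hqb2.symm ▸ hu2)
  have hcx' : p.1 ≤ f'''.1 := by rw [hf'''1]; exact (le_of_eq hv1.symm).trans hcb1
  have hcy' : p.2 ≤ f'''.2 := (hv2.trans (hcb2 ▸ le_refl v.2)).trans hf'''2
  obtain ⟨r, hr, hr2, hr1⟩ := exists_right_witness hA he' hf''' hbx' hcx' hby' hcy'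
  exact ⟨q, hq, r, hr, hq2, hr2, hq1, hr1⟩

/-- For every path connected subset `A` of the Manhattan plane, the double hatching
`L(A)` is L-invariant: `L(L(A)) = L(A)`. -/
theorem doubleHatch_idem (A : Set (ℝ × ℝ)) (hA : IsPathConnected A) :
    doubleHatch (doubleHatch A) = doubleHatch A := by
  apply subset_antisymm
  · intro p hp
    have h1 : p ∈ hatchX (hatchX (hatchY A)) :=
      hatchX_mono (hatchY_doubleHatch_subset hA) hp
    rw [hatchX_idem] at h1
    exact h1
  · exact (subset_hatchY _).trans (subset_hatchX _)
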